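/- For every c > 0, m ≥ 0, k ∈ ℝ² with E_m(k) ≠ 0, every j ∈ {1,2}, and every 2×2 complex matrix M, writing M_D := Π₊(k) M Π₊(k) + Π₋(k) M Π₋(k) for the band-diagonal part of M, one has Tr[ Π₊(k) · α_j · M_D ] = (c k_j / E_m(k)) · Tr[ Π₊(k) · M ], and likewise Tr[ Π₋(k) · α_j · M_D ] = −(c k_j / E_m(k)) · Tr[ Π₋(k) · M ]. -/

import Mathlib

open Matrix Complex

noncomputable section

/-- Pauli matrix `σ₁`. -/
def σ1 : Matrix (Fin 2) (Fin 2) ℂ := !![0, 1; 1, 0]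

/-- Pauli matrix `σ₂`. -/
def σ2 : Matrix (Fin 2) (Fin 2) ℂ := !![0, -I; I, 0]

/-- Pauli matrix `σ₃`. -/
def σ3 : Matrix (Fin 2) (Fin 2) ℂ := !![1, 0; 0, -1]

/-- `α₁ := σ₂`. -/
def α1 : Matrix (Fin 2) (Fin 2) ℂ := σ2

/-- `α₂ := -σ₁`. -/
def α2 : Matrix (Fin 2) (Fin 2) ℂ := -σ1

/-- `γ⁰ := σ₃`. -/
def γ0 : Matrix (Fin 2) (Fin 2) ℂ := σ3

/-- The 2D Dirac symbol `H_m(k) = c (k₁ α₁ + k₂ α₂) + m c² γ⁰`. -/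
def diracSymbol (c m : ℝ) (k : EuclideanSpace ℝ (Fin 2)) : Matrix (Fin 2) (Fin 2) ℂ :=
  ((c * k 0 : ℝ) : ℂ) • α1 + ((c * k 1 : ℝ) : ℂ) • α2 + ((m * c ^ 2 : ℝ) : ℂ) • γ0

/-- The relativistic dispersion `E_m(k) = √(c²‖k‖² + m²c⁴)`. -/
def Em (c m : ℝ) (k : EuclideanSpace ℝ (Fin 2)) : ℝ :=
  Real.sqrt (c ^ 2 * ‖k‖ ^ 2 + m ^ 2 * c ^ 4)

/-- The positive-energy band projector `Π₊(k) = (1/2)(I + H_m(k)/E_m(k))`. -/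
def PiPlus (c m : ℝ) (k : EuclideanSpace ℝ (Fin 2)) : Matrix (Fin 2) (Fin 2) ℂ :=
  (1 / 2 : ℂ) • ((1 : Matrix (Fin 2) (Fin 2) ℂ) + ((Em c m k : ℝ) : ℂ)⁻¹ • diracSymbol c m k)

/-- The negative-energy band projector `Π₋(k) = (1/2)(I - H_m(k)/E_m(k))`. -/
def PiMinus (c m : ℝ) (k : EuclideanSpace ℝ (Fin 2)) : Matrix (Fin 2) (Fin 2) ℂ :=
  (1 / 2 : ℂ) • ((1 : Matrix (Fin 2) (Fin 2) ℂ) - ((Em c m k : ℝ) : ℂ)⁻¹ • diracSymbol c m k)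

/-- The family `α = (α₁, α₂)`. -/
def alphaVec : Fin 2 → Matrix (Fin 2) (Fin 2) ℂ := ![α1, α2]

section Aux

variable (G A M : Matrix (Fin 2) (Fin 2) ℂ) (t : ℂ)

lemma aux_trace (hG : G * G = 1) (hA : A * G + G * A = (2 * t) • 1) :
    ((1/2 : ℂ) • (1 + G) * A *
      ((1/2 : ℂ) • (1 + G) * M * ((1/2 : ℂ) • (1 + G)) +
       (1/2 : ℂ) • (1 - G) * M * ((1/2 : ℂ) • (1 - G)))).trace
      = t * ((1/2 : ℂ) • (1 + G) * M).trace ∧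
    ((1/2 : ℂ) • (1 - G) * A *
      ((1/2 : ℂ) • (1 + G) * M * ((1/2 : ℂ) • (1 + G)) +
       (1/2 : ℂ) • (1 - G) * M * ((1/2 : ℂ) • (1 - G)))).trace
      = -t * ((1/2 : ℂ) • (1 - G) * M).trace := by
  set P : Matrix (Fin 2) (Fin 2) ℂ := (1/2 : ℂ) • (1 + G) with hP
  set Q : Matrix (Fin 2) (Fin 2) ℂ := (1/2 : ℂ) • (1 - G) with hQ
  have hGA : G * A = (2 * t) • 1 - A * G := by
    rw [← hA]; abel
  have hPP : P * P = P := by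
    rw [hP]
    simp only [smul_mul_assoc, mul_smul_comm, smul_smul, add_mul, mul_add, hG, one_mul, mul_one]
    module
  have hQQ : Q * Q = Q := by
    rw [hQ]
    simp only [smul_mul_assoc, mul_smul_comm, smul_smul, sub_mul, mul_sub, hG, one_mul, mul_one]
    module
  have hQP : Q * P = 0 := by
    rw [hP, hQ]
    simp only [smul_mul_assoc, mul_smul_comm, smul_smul, sub_mul, mul_sub, add_mul, mul_add,
      hG, one_mul, mul_one]
    module
  have hPQ : P * Q = 0 := by
    rw [hP, hQ]
    simp only [smul_mul_assoc, mul_smul_comm, smul_smul, sub_mul, mul_sub, add_mul, mul_add,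
      hG, one_mul, mul_one]
    module
  have key : (1 + G) * A * (1 + G) = (2 * t) • (1 + G) := by
    have hGAG : G * A * G = (2 * t) • G - A := by
      rw [hGA, sub_mul, smul_mul_assoc, one_mul, mul_assoc, hG, mul_one]
    calc (1 + G) * A * (1 + G)
        = A + (A * G + G * A) + G * A * G := by noncomm_ring
      _ = (2 * t) • (1 + G) := by rw [hA, hGAG]; module
  have key2 : (1 - G) * A * (1 - G) = (-(2 * t)) • (1 - G) := by
    have hGAG : G * A * G = (2 * t) • G - A := by
      rw [hGA, sub_mul, smul_mul_assoc, one_mul, mul_assoc, hG, mul_one]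
    calc (1 - G) * A * (1 - G)
        = A - (A * G + G * A) + G * A * G := by noncomm_ring
      _ = (-(2 * t)) • (1 - G) := by rw [hA, hGAG]; module
  have hPAP : P * A * P = t • P := by
    rw [hP, smul_mul_assoc, smul_mul_assoc, mul_smul_comm, key, smul_smul, smul_smul, smul_smul]
    congr 1; ring
  have hQAQ : Q * A * Q = (-t) • Q := by
    rw [hQ, smul_mul_assoc, smul_mul_assoc, mul_smul_comm, key2, smul_smul, smul_smul, smul_smul]
    congr 1; ring
  constructor
  · rw [mul_add, Matrix.trace_add]
    have e1 : P * A * (P * M * P) = P * A * P * M * P := by simp only [← mul_assoc]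
    have e2 : P * A * (Q * M * Q) = P * A * Q * M * Q := by simp only [← mul_assoc]
    rw [e1, e2, hPAP]
    have e3 : (P * A * Q * M * Q).trace = (Q * (P * A * Q * M)).trace := by
      rw [← Matrix.trace_mul_comm]
    rw [e3]
    have e4 : Q * (P * A * Q * M) = Q * P * A * Q * M := by simp only [← mul_assoc]
    rw [e4, hQP]
    simp only [zero_mul, Matrix.trace_zero, add_zero, smul_mul_assoc, Matrix.trace_smul,
      smul_eq_mul]
    have e5 : (P * M * P).trace = (P * M).trace := by
      rw [Matrix.trace_mul_comm, ← mul_assoc, hPP]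
    rw [e5]
  · rw [mul_add, Matrix.trace_add]
    have e1 : Q * A * (Q * M * Q) = Q * A * Q * M * Q := by simp only [← mul_assoc]
    have e2 : Q * A * (P * M * P) = Q * A * P * M * P := by simp only [← mul_assoc]
    rw [e1, e2, hQAQ]
    have e3 : (Q * A * P * M * P).trace = (P * (Q * A * P * M)).trace := by
      rw [← Matrix.trace_mul_comm]
    rw [e3]
    have e4 : P * (Q * A * P * M) = P * Q * A * P * M := by simp only [← mul_assoc]
    rw [e4, hPQ]
    simp only [zero_mul, Matrix.trace_zero, zero_add, smul_mul_assoc, Matrix.trace_smul,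
      smul_eq_mul]
    have e5 : (Q * M * Q).trace = (Q * M).trace := by
      rw [Matrix.trace_mul_comm, ← mul_assoc, hQQ]
    rw [e5]

end Aux

lemma hnorm (k : EuclideanSpace ℝ (Fin 2)) : ‖k‖ ^ 2 = k 0 ^ 2 + k 1 ^ 2 := by
  rw [EuclideanSpace.norm_eq, Real.sq_sqrt (by positivity)]
  simp [Fin.sum_univ_two, sq_abs]

lemma hE2 (c m : ℝ) (k : EuclideanSpace ℝ (Fin 2)) :
    Em c m k ^ 2 = c ^ 2 * (k 0 ^ 2 + k 1 ^ 2) + m ^ 2 * c ^ 4 := by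
  rw [Em, Real.sq_sqrt (by positivity), hnorm]

lemma hHH (c m : ℝ) (k : EuclideanSpace ℝ (Fin 2)) :
    diracSymbol c m k * diracSymbol c m k = (((Em c m k : ℝ) : ℂ) ^ 2) • 1 := by
  have h : ((Em c m k : ℝ) : ℂ) ^ 2
      = (c : ℂ) ^ 2 * ((k 0 : ℂ) ^ 2 + (k 1 : ℂ) ^ 2) + (m : ℂ) ^ 2 * (c : ℂ) ^ 4 := by
    rw [← Complex.ofReal_pow, hE2]; push_cast; ring
  ext i j
  fin_cases i <;> fin_cases j <;>
    simp [diracSymbol, α1, α2, γ0, σ1, σ2, σ3, Matrix.mul_apply, Fin.sum_univ_two,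
      Matrix.one_apply] <;>
    first
      | (ring_nf; simp only [Complex.I_sq]; linear_combination -h)
      | (ring_nf; simp only [Complex.I_sq]; linear_combination -2 * h)
      | ring_nf

lemma hAH (c m : ℝ) (k : EuclideanSpace ℝ (Fin 2)) (j : Fin 2) :
    alphaVec j * diracSymbol c m k + diracSymbol c m k * alphaVec j
      = ((2 * (c * k j) : ℝ) : ℂ) • 1 := by
  fin_cases j <;>
  · ext i j'
    fin_cases i <;> fin_cases j' <;>
      simp [alphaVec, diracSymbol, α1, α2, γ0, σ1, σ2, σ3, Matrix.mul_apply, Fin.sum_univ_two,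
        Matrix.one_apply] <;>
      first
        | (push_cast; ring_nf; simp only [Complex.I_sq]; ring)
        | (push_cast; ring_nf)
        | push_cast
        | skip

/-- For `E_m(k) ≠ 0`, `j ∈ {1,2}` and any `2 × 2` matrix `M`, writing
`M_D := Π₊ M Π₊ + Π₋ M Π₋`, one has
`Tr[Π₊ αⱼ M_D] = (c kⱼ / E_m(k)) Tr[Π₊ M]` and
`Tr[Π₋ αⱼ M_D] = -(c kⱼ / E_m(k)) Tr[Π₋ M]`. -/
theorem trace_proj_alpha_diag (c m : ℝ) (hc : 0 < c) (hm : 0 ≤ m)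
    (k : EuclideanSpace ℝ (Fin 2)) (hE : Em c m k ≠ 0) (j : Fin 2)
    (M : Matrix (Fin 2) (Fin 2) ℂ) :
    (PiPlus c m k * alphaVec j *
        (PiPlus c m k * M * PiPlus c m k + PiMinus c m k * M * PiMinus c m k)).trace =
      ((c * k j / Em c m k : ℝ) : ℂ) * (PiPlus c m k * M).trace ∧
    (PiMinus c m k * alphaVec j *
        (PiPlus c m k * M * PiPlus c m k + PiMinus c m k * M * PiMinus c m k)).trace =
      ((-(c * k j / Em c m k) : ℝ) : ℂ) * (PiMinus c m k * M).trace := by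

  set E : ℂ := ((Em c m k : ℝ) : ℂ) with hEdef
  have hEc : E ≠ 0 := by
    rw [hEdef]; exact_mod_cast Complex.ofReal_ne_zero.mpr hE
  set G : Matrix (Fin 2) (Fin 2) ℂ := E⁻¹ • diracSymbol c m k with hGdef
  have hG : G * G = 1 := by
    rw [hGdef, smul_mul_assoc, mul_smul_comm, smul_smul, hHH, smul_smul]
    rw [show E⁻¹ * E⁻¹ * E ^ 2 = 1 by field_simp, one_smul]
  set t : ℂ := ((c * k j / Em c m k : ℝ) : ℂ) with htdef
  have hA : alphaVec j * G + G * alphaVec j = (2 * t) • 1 := by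
    rw [hGdef, mul_smul_comm, smul_mul_assoc, ← smul_add, hAH, smul_smul]
    congr 1
    rw [htdef, hEdef]
    push_cast
    have : ((Em c m k : ℝ) : ℂ) ≠ 0 := hEc
    field_simp
  have main := aux_trace G (alphaVec j) M t hG hA
  have hPi : PiPlus c m k = (1/2 : ℂ) • (1 + G) := rfl
  have hPi' : PiMinus c m k = (1/2 : ℂ) • (1 - G) := rfl
  constructor
  · rw [hPi, hPi']; exact main.1
  · rw [hPi, hPi', show ((-(c * k j / Em c m k) : ℝ) : ℂ) = -t by rw [htdef]; push_cast; ring]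
    exact main.2
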